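/- arXiv:1901.06929 — 5 statements merged into one kernel-verified Lean document; each statement's English description precedes it below -/
import Mathlib

section
/- Let RC_K be a right-angled Coxeter group (a group with generators g_1, ..., g_m satisfying g_i² = 1 for all i, and g_i g_j = g_j g_i for pairs {i,j} in a prescribed graph). Then for every k ≥ 1, the square of any element of γ_k(RC_K) lies in γ_{k+1}(RC_K). -/
/-- The group commutator with the convention `(a, b) = a⁻¹ b⁻¹ a b`. -/
def gcomm {G : Type*} [Group G] (a b : G) : G := a⁻¹ * b⁻¹ * a * b

/-- The defining relations of the right-angled Coxeter group of a graph `E` on `m` vertices: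
`g_i² = 1` for every `i` and `g_i g_j = g_j g_i` whenever `{i, j}` is an edge. -/
def racgRels (m : ℕ) (E : Fin m → Fin m → Prop) : Set (FreeGroup (Fin m)) :=
  {w | (∃ i, w = FreeGroup.of i ^ 2) ∨
    ∃ i j, E i j ∧ w = gcomm (FreeGroup.of i) (FreeGroup.of j)}

/-- The right-angled Coxeter group `RC_K`. -/
abbrev RACG (m : ℕ) (E : Fin m → Fin m → Prop) := PresentedGroup (racgRels m E)

section Key

open scoped commutatorElement

variable {G : Type*} [Group G]

private lemma lcs_succ_comm (n : ℕ) :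
    (⊤ : Subgroup G).lowerCentralSeries (n + 1) = ⁅(⊤ : Subgroup G).lowerCentralSeries n, (⊤ : Subgroup G)⁆ := rfl

/-- Key general lemma: if `G` is generated by a set of involutions, then the square of any
element of `γ_{n}` (0-indexed) lies in `γ_{n+1}`. -/
private lemma sq_mem_key (S : Set G) (hS : Subgroup.closure S = ⊤)
    (hsq : ∀ s ∈ S, s ^ 2 = 1) (n : ℕ) :
    ∀ x ∈ (⊤ : Subgroup G).lowerCentralSeries n, x ^ 2 ∈ (⊤ : Subgroup G).lowerCentralSeries (n + 1) := by
  set N := (⊤ : Subgroup G).lowerCentralSeries (n + 1) with hN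
  let π : G →* G ⧸ N := QuotientGroup.mk' N
  have hπ1 : ∀ z : G, π z = 1 ↔ z ∈ N := fun z => QuotientGroup.eq_one_iff z
  have hcent : ∀ x ∈ (⊤ : Subgroup G).lowerCentralSeries n, ∀ q : G ⧸ N, Commute (π x) q := by
    intro x hx q
    obtain ⟨y, rfl⟩ := QuotientGroup.mk'_surjective N q
    rw [← commutatorElement_eq_one_iff_commute, ← map_commutatorElement, hπ1, hN,
      lcs_succ_comm]
    exact Subgroup.commutator_mem_commutator hx (Subgroup.mem_top y)
  -- the subgroup of central square-one elements of the quotient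
  let T : Subgroup (G ⧸ N) :=
    { carrier := {q | q ^ 2 = 1 ∧ ∀ r, Commute q r}
      one_mem' := ⟨one_pow 2, fun r => Commute.one_left r⟩
      mul_mem' := by
        rintro a b ⟨ha2, hac⟩ ⟨hb2, hbc⟩
        refine ⟨?_, fun r => (hac r).mul_left (hbc r)⟩
        have : a * b * (a * b) = a * a * (b * b) := by
          rw [mul_assoc a b (a * b), ← mul_assoc b a b, (hbc a).eq]
          group
        rw [pow_two, this, ← pow_two, ← pow_two, ha2, hb2, one_mul]
      inv_mem' := by
        rintro a ⟨ha2, hac⟩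
        exact ⟨by rw [inv_pow, ha2, inv_one], fun r => (hac r).inv_left⟩ }
  have hTmem : ∀ q : G ⧸ N, q ∈ T ↔ q ^ 2 = 1 ∧ ∀ r, Commute q r := fun q => Iff.rfl
  suffices h : ∀ x ∈ (⊤ : Subgroup G).lowerCentralSeries n, π x ∈ T by
    intro x hx
    have h2 := ((hTmem _).1 (h x hx)).1
    rw [← map_pow] at h2
    exact (hπ1 _).1 h2
  cases n with
  | zero =>
    intro x _
    have hle : Subgroup.closure S ≤ T.comap π := by
      rw [Subgroup.closure_le]
      intro s hs
      refine Subgroup.mem_comap.2 ((hTmem _).2 ⟨?_, hcent s (by trivial)⟩)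
      rw [← map_pow, hsq s hs, map_one]
    have := hle (hS ▸ Subgroup.mem_top x)
    exact Subgroup.mem_comap.1 this
  | succ n' =>
    intro x hx
    have hle : (⊤ : Subgroup G).lowerCentralSeries (n' + 1) ≤ T.comap π := by
      rw [lcs_succ_comm, Subgroup.commutator_le]
      intro a ha b _
      -- any commutator ⁅a, c⁆ lies in γ_{n'+1}, hence its image is central
      have hac : ∀ c : G, ⁅a, c⁆ ∈ (⊤ : Subgroup G).lowerCentralSeries (n' + 1) := by
        intro c
        rw [lcs_succ_comm]
        exact Subgroup.commutator_mem_commutator ha (Subgroup.mem_top c)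
      have hccent : ∀ c : G, ∀ q, Commute (π ⁅a, c⁆) q := fun c q => hcent _ (hac c) q
      -- the map c ↦ π ⁅a, c⁆ is multiplicative
      have hmul : ∀ b c : G, π ⁅a, b * c⁆ = π ⁅a, b⁆ * π ⁅a, c⁆ := by
        intro b c
        have hid : ⁅a, b * c⁆ = ⁅a, b⁆ * (b * ⁅a, c⁆ * b⁻¹) := by
          simp only [commutatorElement_def]; group
        rw [hid, map_mul, map_mul, map_mul, map_inv]
        congr 1
        have := (hccent c (π b)).symm.eq
        rw [this, mul_assoc, mul_inv_cancel, mul_one]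
      have hinv : ∀ b : G, π ⁅a, b⁻¹⁆ = (π ⁅a, b⁆)⁻¹ := by
        intro b
        have hid : ⁅a, b⁻¹⁆ = b⁻¹ * ⁅a, b⁆⁻¹ * b := by
          simp only [commutatorElement_def]; group
        rw [hid, map_mul, map_mul, map_inv, map_inv]
        have := ((hccent b (π b)⁻¹).inv_left).eq
        rw [← this, mul_assoc, inv_mul_cancel, mul_one]
      -- the set of b with π ⁅a, b⁆ ∈ T is a subgroup containing S
      let K : Subgroup G :=
        { carrier := {b | π ⁅a, b⁆ ∈ T}
          one_mem' := by
            show π ⁅a, (1 : G)⁆ ∈ T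
            rw [commutatorElement_one_right, map_one]
            exact T.one_mem
          mul_mem' := by
            intro b c hb hc
            show π ⁅a, b * c⁆ ∈ T
            rw [hmul]
            exact T.mul_mem hb hc
          inv_mem' := by
            intro b hb
            show π ⁅a, b⁻¹⁆ ∈ T
            rw [hinv]
            exact T.inv_mem hb }
      have hSK : Subgroup.closure S ≤ K := by
        rw [Subgroup.closure_le]
        intro s hs
        show π ⁅a, s⁆ ∈ T
        refine (hTmem _).2 ⟨?_, hccent s⟩
        have h1 : π ⁅a, s * s⁆ = π ⁅a, s⁆ * π ⁅a, s⁆ := hmul s s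
        have h2 : s * s = 1 := by rw [← pow_two]; exact hsq s hs
        rw [h2, commutatorElement_one_right, map_one] at h1
        rw [pow_two, ← h1]
      have hbK : b ∈ K := hSK (hS ▸ Subgroup.mem_top b)
      exact Subgroup.mem_comap.2 hbK
    exact Subgroup.mem_comap.1 (hle hx)

end Key

private lemma racg_gen_sq (m : ℕ) (E : Fin m → Fin m → Prop) (i : Fin m) :
    (PresentedGroup.of i : RACG m E) ^ 2 = 1 := by
  have : (PresentedGroup.of i : RACG m E) ^ 2
      = PresentedGroup.mk (racgRels m E) (FreeGroup.of i ^ 2) := by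
    rfl
  rw [this]
  have hmem : FreeGroup.of i ^ 2 ∈ Subgroup.normalClosure (racgRels m E) :=
    Subgroup.subset_normalClosure (Or.inl ⟨i, rfl⟩)
  exact (QuotientGroup.eq_one_iff _).2 hmem

/-- The square of any element of `γ_k(RC_K)` lies in `γ_{k+1}(RC_K)`
(here `γ_k = lowerCentralSeries _ (k - 1)`). -/
theorem sq_mem_lowerCentralSeries_succ_racg (m : ℕ) (E : Fin m → Fin m → Prop)
    (k : ℕ) (hk : 1 ≤ k) (a : RACG m E)
    (ha : a ∈ (⊤ : Subgroup (RACG m E)).lowerCentralSeries (k - 1)) :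
    a ^ 2 ∈ (⊤ : Subgroup (RACG m E)).lowerCentralSeries k := by
  have hk' : k - 1 + 1 = k := Nat.succ_pred_eq_of_pos hk
  rw [← hk']
  exact sq_mem_key (Set.range (PresentedGroup.of : Fin m → RACG m E))
    (PresentedGroup.closure_range_of _)
    (by rintro s ⟨i, rfl⟩; exact racg_gen_sq m E i) (k - 1) a ha
end

section
/- Let G = Z/2 * Z/2 be the free product of two cyclic groups of order 2 with generators g_1, g_2. Then for every k ≥ 2, γ_k(G) is an infinite cyclic group generated by the left-nested commutator (g_1, g_2, g_1, ..., g_1) of length k. -/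
/-- The free product `ℤ/2 * ℤ/2`, presented with two generators of order 2. -/
abbrev Z2Z2 := PresentedGroup {w : FreeGroup (Fin 2) | ∃ i, w = FreeGroup.of i ^ 2}

/-- The left-nested commutator `(g₁, g₂, g₁, …, g₁)` of length `k` (for `k ≥ 2`). -/
def nestedC (k : ℕ) : Z2Z2 :=
  (fun x => gcomm x (PresentedGroup.of 0))^[k - 2]
    (gcomm (PresentedGroup.of 0) (PresentedGroup.of 1))

open scoped commutatorElement

namespace Z2Z2aux

abbrev a : Z2Z2 := PresentedGroup.of 0
abbrev b : Z2Z2 := PresentedGroup.of 1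
abbrev t : Z2Z2 := a * b

lemma sq (i : Fin 2) : (PresentedGroup.of i : Z2Z2) * PresentedGroup.of i = 1 := by
  have h : ((FreeGroup.of i)^2 : FreeGroup (Fin 2)) ∈
      Subgroup.normalClosure {w : FreeGroup (Fin 2) | ∃ i, w = FreeGroup.of i ^ 2} :=
    Subgroup.subset_normalClosure ⟨i, rfl⟩
  have : (PresentedGroup.mk _ ((FreeGroup.of i)^2) : Z2Z2) = 1 :=
    (QuotientGroup.eq_one_iff _).mpr h
  simp only [pow_two, map_mul] at this
  exact this

lemma ha : a * a = 1 := sq 0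
lemma hb : b * b = 1 := sq 1
lemma ha' : a⁻¹ = a := by rw [eq_comm, eq_inv_iff_mul_eq_one, ha]
lemma hb' : b⁻¹ = b := by rw [eq_comm, eq_inv_iff_mul_eq_one, hb]

lemma ht : t⁻¹ = b * a := by rw [mul_inv_rev, ha', hb']

lemma conj_t : a * t * a = t⁻¹ := by
  rw [ht]; show a * (a * b) * a = b * a; rw [← mul_assoc, ha, one_mul]

lemma conj_zpow' (n : ℤ) : a * t ^ n * a = t ^ (-n) := by
  have := conj_zpow (i := n) (a := a) (b := t)
  rw [ha'] at this
  rw [← this, conj_t, inv_zpow, ← zpow_neg]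

-- simp set for normalization (right-associated words)
lemma A2 (n : ℤ) : a * t ^ n = t ^ (-n) * a := by
  have := conj_zpow' n
  rw [← this, mul_assoc, mul_assoc, ha, mul_one]

lemma A1 (n : ℤ) (x : Z2Z2) : a * (t ^ n * x) = t ^ (-n) * (a * x) := by
  rw [← mul_assoc, A2, mul_assoc]

lemma A3 (x : Z2Z2) : a * (a * x) = x := by rw [← mul_assoc, ha, one_mul]

lemma T2 (n m : ℤ) : t ^ n * t ^ m = t ^ (n + m) := (zpow_add t n m).symm

lemma T1 (n m : ℤ) (x : Z2Z2) : t ^ n * (t ^ m * x) = t ^ (n + m) * x := by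
  rw [← mul_assoc, T2]

lemma hb_eq : b = t ^ (-1 : ℤ) * a := by
  rw [zpow_neg_one, ht, mul_assoc, ha, mul_one]

lemma inv_form (n : ℤ) : (t ^ n * a)⁻¹ = t ^ n * a := by
  rw [mul_inv_rev, ha', ← zpow_neg, A2, neg_neg]

/-- Every element is `t^n` or `t^n * a`. -/
lemma form (g : Z2Z2) : ∃ n : ℤ, g = t ^ n ∨ g = t ^ n * a := by
  have hg : g ∈ Subgroup.closure (Set.range (PresentedGroup.of :
      Fin 2 → Z2Z2)) := by rw [PresentedGroup.closure_range_of]; trivial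
  induction hg using Subgroup.closure_induction with
  | mem x hx =>
    obtain ⟨i, rfl⟩ := hx
    fin_cases i
    · exact ⟨0, Or.inr (by rw [zpow_zero, one_mul]; rfl)⟩
    · exact ⟨-1, Or.inr hb_eq⟩
  | one => exact ⟨0, Or.inl (zpow_zero t).symm⟩
  | mul x y _ _ ihx ihy =>
    obtain ⟨n, hn | hn⟩ := ihx <;> obtain ⟨m, hm | hm⟩ := ihy <;> subst hn hm
    · exact ⟨n + m, Or.inl (T2 n m)⟩
    · exact ⟨n + m, Or.inr (by rw [← mul_assoc, T2])⟩
    · refine ⟨n - m, Or.inr ?_⟩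
      simp only [mul_assoc, A1, A2, A3, T1, T2, ha, mul_one, one_mul]
      rw [sub_eq_add_neg]
    · refine ⟨n - m, Or.inl ?_⟩
      simp only [mul_assoc, A1, A2, A3, T1, T2, ha, mul_one, one_mul]
      rw [sub_eq_add_neg]
  | inv x _ ihx =>
    obtain ⟨n, hn | hn⟩ := ihx <;> subst hn
    · exact ⟨-n, Or.inl (by rw [zpow_neg])⟩
    · exact ⟨n, Or.inr (inv_form n)⟩

/-- commutator computations -/
lemma comm_tpow (p n : ℤ) : ⁅t ^ p, t ^ n⁆ = 1 :=
  commutatorElement_eq_one_iff_commute.mpr ((Commute.refl t).zpow_zpow p n)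

lemma comm_tpow_flip (p n : ℤ) : ⁅t ^ p, t ^ n * a⁆ = t ^ (2 * p) := by
  rw [commutatorElement_def, inv_form, ← zpow_neg]
  simp only [mul_assoc, A1, A2, A3, T1, T2, ha, mul_one, one_mul]
  congr 1; ring

lemma comm_flip_flip (p n : ℤ) : ⁅t ^ p * a, t ^ n * a⁆ = t ^ (2 * (p - n)) := by
  rw [commutatorElement_def, inv_form, inv_form]
  simp only [mul_assoc, A1, A2, A3, T1, T2, ha, mul_one, one_mul]
  congr 1; ring

lemma comm_flip_tpow (p n : ℤ) : ⁅t ^ n * a, t ^ p⁆ = t ^ (-(2 * p)) := by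
  rw [← commutatorElement_inv, comm_tpow_flip, ← zpow_neg]

end Z2Z2aux

namespace Z2Z2aux

lemma comm_zpowers_top (m : ℤ) :
    ⁅Subgroup.zpowers (t ^ m), (⊤ : Subgroup Z2Z2)⁆ = Subgroup.zpowers (t ^ (2 * m)) := by
  apply le_antisymm
  · rw [Subgroup.commutator_le]
    intro g1 hg1 g2 _
    obtain ⟨l, rfl⟩ := hg1
    simp only [← zpow_mul]
    obtain ⟨n, hn | hn⟩ := form g2 <;> subst hn
    · rw [comm_tpow]; exact one_mem _
    · rw [comm_tpow_flip]
      exact ⟨l, by simp only [← zpow_mul]; congr 1; ring⟩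
  · rw [Subgroup.zpowers_le]
    have : (t : Z2Z2) ^ (2 * m) = ⁅t ^ m, t ^ (0:ℤ) * a⁆ := (comm_tpow_flip m 0).symm
    rw [this]
    exact Subgroup.commutator_mem_commutator (Subgroup.mem_zpowers _) (Subgroup.mem_top _)

lemma lcs_one : Subgroup.lowerCentralSeries (⊤ : Subgroup Z2Z2) 1 = Subgroup.zpowers (t ^ (2:ℤ)) := by
  rw [show Subgroup.lowerCentralSeries (⊤ : Subgroup Z2Z2) 1 = ⁅(⊤ : Subgroup Z2Z2), ⊤⁆ from rfl]
  apply le_antisymm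
  · rw [Subgroup.commutator_le]
    intro g1 _ g2 _
    obtain ⟨n, hn | hn⟩ := form g1 <;> obtain ⟨m, hm | hm⟩ := form g2 <;> subst hn hm
    · rw [comm_tpow]; exact one_mem _
    · rw [comm_tpow_flip]; exact ⟨n, by simp only [← zpow_mul]⟩
    · rw [comm_flip_tpow]; exact ⟨-m, by simp only [← zpow_mul]; congr 1; ring⟩
    · rw [comm_flip_flip]; exact ⟨n - m, by simp only [← zpow_mul]⟩
  · rw [Subgroup.zpowers_le]
    have : (t : Z2Z2) ^ (2:ℤ) = ⁅t ^ (1:ℤ), t ^ (0:ℤ) * a⁆ := by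
      rw [comm_tpow_flip]; congr 1
    rw [this]
    exact Subgroup.commutator_mem_commutator (Subgroup.mem_top _) (Subgroup.mem_top _)

lemma lcs_eq (j : ℕ) :
    Subgroup.lowerCentralSeries (⊤ : Subgroup Z2Z2) (j + 1) = Subgroup.zpowers (t ^ ((2:ℤ) ^ (j + 1))) := by
  induction j with
  | zero => simpa using lcs_one
  | succ j ih =>
    rw [show Subgroup.lowerCentralSeries (⊤ : Subgroup Z2Z2) (j+1+1) = ⁅Subgroup.lowerCentralSeries (⊤ : Subgroup Z2Z2) (j+1), ⊤⁆ from rfl,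
      ih, comm_zpowers_top]
    congr 2
    ring

lemma gcomm_ab : gcomm a b = t ^ (2:ℤ) := by
  rw [gcomm, ha', hb', zpow_two]
  simp [mul_assoc]

lemma gcomm_tpow (p : ℤ) : gcomm (t ^ p) a = t ^ (-(2 * p)) := by
  rw [gcomm, ha', ← zpow_neg]
  simp only [mul_assoc, A1, A2, A3, T1, T2, ha, mul_one, one_mul]
  congr 1; ring

lemma iterate_eq (j : ℕ) :
    (fun x => gcomm x a)^[j] (t ^ (2:ℤ)) = t ^ (2 * (-2:ℤ) ^ j) := by
  induction j with
  | zero => simp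
  | succ j ih =>
    rw [Function.iterate_succ_apply', ih, gcomm_tpow]
    congr 1; ring

lemma nestedC_eq (k : ℕ) : nestedC k = t ^ (2 * (-2:ℤ) ^ (k - 2)) := by
  rw [nestedC, show gcomm (PresentedGroup.of 0) (PresentedGroup.of 1) = t ^ (2:ℤ) from gcomm_ab]
  exact iterate_eq (k - 2)

lemma zpowers_neg2 (j : ℕ) :
    Subgroup.zpowers (t ^ (2 * (-2:ℤ) ^ j)) = Subgroup.zpowers (t ^ ((2:ℤ) ^ (j + 1))) := by
  rcases Nat.even_or_odd j with hj | hj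
  · congr 2
    rw [hj.neg_pow]
    ring
  · rw [hj.neg_pow]
    rw [show 2 * -(2:ℤ)^j = -(2^(j+1)) by ring, zpow_neg, Subgroup.zpowers_inv]

/-- The representation into `Perm ℤ`. -/
def s : Equiv.Perm ℤ :=
  ⟨fun x => 1 - x, fun x => 1 - x, fun x => by simp, fun x => by simp⟩

def f : Fin 2 → Equiv.Perm ℤ := ![Equiv.neg ℤ, s]

lemma hrels : ∀ r ∈ {w : FreeGroup (Fin 2) | ∃ i, w = FreeGroup.of i ^ 2},
    FreeGroup.lift f r = 1 := by
  rintro r ⟨i, rfl⟩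
  rw [map_pow, FreeGroup.lift_apply_of]
  fin_cases i <;> ext x <;>
    simp [f, s, pow_two, Equiv.Perm.mul_apply]

def π : Z2Z2 →* Equiv.Perm ℤ := PresentedGroup.toGroup hrels

lemma π_t : π t = Equiv.addRight (-1 : ℤ) := by
  ext x
  rw [map_mul]
  show π a (π b x) = x + (-1)
  rw [show π a = f 0 from PresentedGroup.toGroup.of hrels,
    show π b = f 1 from PresentedGroup.toGroup.of hrels]
  show -(1 - x) = x + (-1)
  ring

lemma t_zpow_ne_one {m : ℤ} (hm : m ≠ 0) : (t : Z2Z2) ^ m ≠ 1 := by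
  intro h
  have := congrArg π h
  rw [map_zpow, π_t, map_one, Equiv.zsmul_addRight] at this
  have := congrArg (fun e : Equiv.Perm ℤ => e 0) this
  simp at this
  omega

lemma not_finOrder {m : ℤ} (hm : m ≠ 0) : ¬ IsOfFinOrder ((t : Z2Z2) ^ m) := by
  intro h
  obtain ⟨n, hn, hpow⟩ := isOfFinOrder_iff_pow_eq_one.mp h
  rw [← zpow_natCast, ← zpow_mul] at hpow
  exact t_zpow_ne_one (by positivity) hpow

end Z2Z2aux


open Z2Z2aux

/-- For every `k ≥ 2`, `γ_k(ℤ/2 * ℤ/2)` is an infinite cyclic group generated by the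
left-nested commutator `(g₁, g₂, g₁, …, g₁)` of length `k`
(here `γ_k = lowerCentralSeries _ (k - 1)`). -/
theorem lcs_Z2Z2_infinite_cyclic (k : ℕ) (hk : 2 ≤ k) :
    Subgroup.lowerCentralSeries (⊤ : Subgroup Z2Z2) (k - 1) = Subgroup.zpowers (nestedC k) ∧
      ¬ IsOfFinOrder (nestedC k) := by
  have hk1 : k - 1 = (k - 2) + 1 := by omega
  rw [nestedC_eq, hk1, lcs_eq, zpowers_neg2]
  refine ⟨rfl, not_finOrder ?_⟩
  have : (-2:ℤ) ^ (k - 2) ≠ 0 := by positivity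
  intro h
  apply this
  linarith
end

section
/- Let G = Z/2 * Z/2. Then γ_1(G)/γ_2(G) ≅ Z/2 ⊕ Z/2 and γ_k(G)/γ_{k+1}(G) ≅ Z/2 for every k ≥ 2. -/
namespace Z2Z2Aux

open DihedralGroup Subgroup
open scoped commutatorElement

abbrev D := DihedralGroup 0

abbrev rels : Set (FreeGroup (Fin 2)) := {w : FreeGroup (Fin 2) | ∃ i, w = FreeGroup.of i ^ 2}

instance : CharZero (ZMod 0) := CharP.charP_to_charZero _

/-- `ZMod 0` is definitionally `ℤ`. -/
def toInt : ZMod 0 → ℤ := fun i => i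

@[simp] lemma cast_toInt (i : ZMod 0) : (Int.cast (toInt i : ℤ) : ZMod 0) = i := rfl
@[simp] lemma toInt_cast (i : ℤ) : toInt (Int.cast i : ZMod 0) = i := rfl

lemma r_inv (x : ZMod 0) : (r x : D)⁻¹ = r (-x) :=
  inv_eq_of_mul_eq_one_right (by rw [r_mul_r, add_neg_cancel]; rfl)

lemma sr_inv (x : ZMod 0) : (sr x : D)⁻¹ = sr x :=
  inv_eq_of_mul_eq_one_right (sr_mul_self x)

lemma r_zpow (m i : ℤ) : (r (Int.cast (m : ℤ) : ZMod 0) : D) ^ i = r (Int.cast (m * i : ℤ) : ZMod 0) := by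
  induction i using Int.induction_on with
  | zero => rw [zpow_zero, mul_zero, Int.cast_zero]; rfl
  | succ k ih =>
      rw [zpow_add_one, ih, r_mul_r]
      congr 1
      push_cast
      ring
  | pred k ih =>
      rw [zpow_sub_one, ih, r_inv, r_mul_r]
      congr 1
      push_cast
      ring

lemma r_zpow' (x : ZMod 0) (i : ℤ) : (r x : D) ^ i = r (Int.cast (toInt x * i : ℤ) : ZMod 0) :=
  r_zpow (toInt x) i

lemma lcs_succ (G : Type*) [Group G] (n : ℕ) :
    (⊤ : Subgroup G).lowerCentralSeries (n + 1) = ⁅(⊤ : Subgroup G).lowerCentralSeries n, ⊤⁆ := rfl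

lemma comm_r_r (a j : ZMod 0) : ⁅(r a : D), r j⁆ = 1 := by
  rw [commutatorElement_def]
  simp only [r_mul_r, r_inv, one_def]
  congr 1
  ring

lemma comm_r_sr (a j : ZMod 0) : ⁅(r a : D), sr j⁆ = r (a + a) := by
  rw [commutatorElement_def]
  simp only [r_mul_sr, r_inv, sr_inv, sr_mul_r, sr_mul_sr]
  congr 1
  ring

lemma comm_sr_r (a j : ZMod 0) : ⁅(sr a : D), r j⁆ = r (-j - j) := by
  rw [commutatorElement_def]
  simp only [sr_mul_r, r_inv, sr_inv, sr_mul_sr, r_mul_r]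
  congr 1
  ring

lemma comm_sr_sr (a j : ZMod 0) : ⁅(sr a : D), sr j⁆ = r (j - a + (j - a)) := by
  rw [commutatorElement_def]
  simp only [sr_mul_sr, r_inv, sr_inv, r_mul_sr, r_mul_r]
  congr 1
  ring

lemma r_mem_zpowers_iff {m : ℤ} {x : ZMod 0} :
    (r x : D) ∈ zpowers (r (Int.cast (m : ℤ) : ZMod 0)) ↔ ∃ i : ℤ, x = (Int.cast (m * i : ℤ) : ZMod 0) := by
  constructor
  · rintro ⟨i, hi⟩
    replace hi : (r (Int.cast (m : ℤ) : ZMod 0) : D) ^ i = r x := hi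
    rw [r_zpow] at hi
    exact ⟨i, (r.inj hi).symm⟩
  · rintro ⟨i, rfl⟩
    exact ⟨i, r_zpow m i⟩

lemma sr_not_mem_zpowers (m : ℤ) (x : ZMod 0) :
    (sr x : D) ∉ zpowers (r (Int.cast (m : ℤ) : ZMod 0)) := by
  rintro ⟨i, hi⟩
  replace hi : (r (Int.cast (m : ℤ) : ZMod 0) : D) ^ i = sr x := hi
  rw [r_zpow] at hi
  exact absurd hi (by simp)

lemma commutator_zpowers (m : ℤ) :
    ⁅zpowers ((r (Int.cast (m : ℤ) : ZMod 0)) : D), (⊤ : Subgroup D)⁆ =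
      zpowers (r (Int.cast (2 * m : ℤ) : ZMod 0)) := by
  apply le_antisymm
  · rw [commutator_le]
    rintro g hg t -
    obtain ⟨i, rfl⟩ := mem_zpowers_iff.mp hg
    show ⁅(r (Int.cast (m : ℤ) : ZMod 0) : D) ^ i, t⁆ ∈ _
    rw [r_zpow]
    rcases t with j | j
    · rw [comm_r_r]; exact one_mem _
    · rw [comm_r_sr]
      refine r_mem_zpowers_iff.mpr ⟨i, ?_⟩
      push_cast
      ring
  · rw [zpowers_le]
    have h := commutator_mem_commutator (g₁ := (r (Int.cast (m : ℤ) : ZMod 0) : D)) (g₂ := sr 0)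
      (mem_zpowers _) (mem_top _)
    rwa [comm_r_sr, show (Int.cast (m : ℤ) : ZMod 0) + (Int.cast (m : ℤ) : ZMod 0) = (Int.cast (2 * m : ℤ) : ZMod 0) by
      push_cast; ring] at h

lemma commutator_top : ⁅(⊤ : Subgroup D), (⊤ : Subgroup D)⁆ =
    zpowers (r (Int.cast (2 : ℤ) : ZMod 0)) := by
  apply le_antisymm
  · rw [commutator_le]
    rintro (a | a) - (j | j) -
    · rw [comm_r_r]; exact one_mem _
    · rw [comm_r_sr]
      refine r_mem_zpowers_iff.mpr ⟨toInt a, ?_⟩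
      push_cast [cast_toInt]
      ring
    · rw [comm_sr_r]
      refine r_mem_zpowers_iff.mpr ⟨-toInt j, ?_⟩
      push_cast [cast_toInt]
      ring
    · rw [comm_sr_sr]
      refine r_mem_zpowers_iff.mpr ⟨toInt j - toInt a, ?_⟩
      push_cast [cast_toInt]
      ring
  · rw [zpowers_le]
    have h := commutator_mem_commutator (g₁ := (r (Int.cast (1 : ℤ) : ZMod 0) : D)) (g₂ := sr 0)
      (mem_top _) (mem_top _)
    rwa [comm_r_sr, show (Int.cast (1 : ℤ) : ZMod 0) + (Int.cast (1 : ℤ) : ZMod 0) = (Int.cast (2 : ℤ) : ZMod 0) by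
      norm_num] at h

lemma lcs_D (n : ℕ) (hn : 1 ≤ n) :
    (⊤ : Subgroup D).lowerCentralSeries n = zpowers (r (Int.cast (2 ^ n : ℤ) : ZMod 0)) := by
  induction n with
  | zero => omega
  | succ n ih =>
    rcases Nat.lt_or_ge n 1 with h | h
    · interval_cases n
      rw [lcs_succ, Subgroup.lowerCentralSeries_zero, commutator_top]
      norm_num
    · rw [lcs_succ, ih h, commutator_zpowers]
      congr 2
      push_cast
      ring

/-! ### The group `Z2Z2` -/

lemma gen_sq (i : Fin 2) : (PresentedGroup.of (rels := rels) i) ^ 2 = 1 := by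
  have h : FreeGroup.of i ^ 2 ∈ Subgroup.normalClosure rels :=
    Subgroup.subset_normalClosure ⟨i, rfl⟩
  show (PresentedGroup.mk rels (FreeGroup.of i)) ^ 2 = 1
  rw [← map_pow]
  exact (QuotientGroup.eq_one_iff _).mpr h

def a : Z2Z2 := PresentedGroup.of 0
def b : Z2Z2 := PresentedGroup.of 1
def t : Z2Z2 := a * b

lemma a_mul_a : a * a = 1 := by rw [← sq]; exact gen_sq 0
lemma b_mul_b : b * b = 1 := by rw [← sq]; exact gen_sq 1
lemma a_inv : a⁻¹ = a := by rw [inv_eq_iff_mul_eq_one, a_mul_a]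
lemma b_inv : b⁻¹ = b := by rw [inv_eq_iff_mul_eq_one, b_mul_b]

lemma conj_t : a * t * a = t⁻¹ := by
  rw [t, mul_inv_rev, a_inv, b_inv]
  calc a * (a * b) * a = (a * a) * b * a := by group
  _ = b * a := by rw [a_mul_a, one_mul]

lemma conj_t_zpow (i : ℤ) : a * t ^ i * a = t ^ (-i) := by
  have h : a * t ^ i * a⁻¹ = (a * t * a⁻¹) ^ i := (conj_zpow).symm
  rw [a_inv] at h
  rw [h, conj_t, inv_zpow, zpow_neg]

lemma t_zpow_mul_a (i : ℤ) : t ^ i * a = a * t ^ (-i) := by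
  have h := conj_t_zpow i
  calc t ^ i * a = (a * a) * t ^ i * a := by rw [a_mul_a, one_mul]
  _ = a * (a * t ^ i * a) := by group
  _ = a * t ^ (-i) := by rw [h]

/-- the inverse map `D → Z2Z2`. -/
def psiFun : D → Z2Z2
  | .r i => t ^ toInt i
  | .sr i => a * t ^ toInt i

def psi : D →* Z2Z2 :=
  MonoidHom.mk' psiFun (by
    rintro (i | i) (j | j)
    · show t ^ toInt (i + j) = t ^ toInt i * t ^ toInt j
      rw [show toInt (i + j) = toInt i + toInt j from rfl]
      exact zpow_add t _ _
    · show a * t ^ toInt (j - i) = t ^ toInt i * (a * t ^ toInt j)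
      rw [show toInt (j - i) = toInt j - toInt i from rfl,
        ← mul_assoc, t_zpow_mul_a, mul_assoc, ← zpow_add, sub_eq_neg_add]
    · show a * t ^ toInt (i + j) = (a * t ^ toInt i) * t ^ toInt j
      rw [show toInt (i + j) = toInt i + toInt j from rfl, mul_assoc, ← zpow_add]
    · show t ^ toInt (j - i) = (a * t ^ toInt i) * (a * t ^ toInt j)
      rw [show toInt (j - i) = toInt j - toInt i from rfl]
      symm
      calc (a * t ^ toInt i) * (a * t ^ toInt j)
          = (a * t ^ toInt i * a) * t ^ toInt j := by group
        _ = t ^ (-toInt i) * t ^ toInt j := by rw [conj_t_zpow]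
        _ = t ^ (toInt j - toInt i) := by rw [← zpow_add, neg_add_eq_sub])

lemma psi_r (i : ZMod 0) : psi (r i) = t ^ toInt i := rfl
lemma psi_sr (i : ZMod 0) : psi (sr i) = a * t ^ toInt i := rfl

def phi : Z2Z2 →* D :=
  PresentedGroup.toGroup (f := fun i : Fin 2 => (sr ((i : ℕ) : ZMod 0) : D))
    (by rintro w ⟨i, rfl⟩; rw [map_pow, FreeGroup.lift_apply_of, sq, sr_mul_self])

lemma phi_a : phi a = sr 0 := by
  show phi (PresentedGroup.of 0) = _
  rw [phi, PresentedGroup.toGroup.of]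
  norm_num

lemma phi_b : phi b = sr 1 := by
  show phi (PresentedGroup.of 1) = _
  rw [phi, PresentedGroup.toGroup.of]
  norm_num

lemma phi_t : phi t = r 1 := by
  rw [t, map_mul, phi_a, phi_b, sr_mul_sr, sub_zero]

lemma phi_psi : phi.comp psi = MonoidHom.id D := by
  ext x
  rcases x with i | i
  · show phi (t ^ toInt i) = r i
    rw [map_zpow, phi_t, r_zpow' 1 (toInt i)]
    norm_num
  · show phi (a * t ^ toInt i) = sr i
    rw [map_mul, map_zpow, phi_a, phi_t, r_zpow' 1 (toInt i)]
    norm_num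

lemma psi_phi : psi.comp phi = MonoidHom.id Z2Z2 := by
  apply PresentedGroup.ext
  intro x
  fin_cases x
  · show psi (phi a) = a
    rw [phi_a, psi_sr]
    norm_num
    rw [show toInt 0 = 0 from rfl, zpow_zero]
  · show psi (phi b) = b
    rw [phi_b, psi_sr]
    rw [show toInt 1 = 1 from rfl, zpow_one, t, ← mul_assoc, a_mul_a, one_mul]

lemma phi_psi_apply (x : D) : phi (psi x) = x :=
  congrFun (congrArg (fun f : D →* D => (f : D → D)) phi_psi) x

lemma psi_phi_apply (x : Z2Z2) : psi (phi x) = x :=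
  congrFun (congrArg (fun f : Z2Z2 →* Z2Z2 => (f : Z2Z2 → Z2Z2)) psi_phi) x

lemma phi_bij : Function.Bijective phi :=
  ⟨fun x y h => by rw [← psi_phi_apply x, h, psi_phi_apply],
   fun y => ⟨psi y, phi_psi_apply y⟩⟩

lemma map_lcs (n : ℕ) :
    ((⊤ : Subgroup Z2Z2).lowerCentralSeries n).map phi = (⊤ : Subgroup D).lowerCentralSeries n := by
  induction n with
  | zero =>
      show Subgroup.map phi ⊤ = ⊤
      exact Subgroup.map_top_of_surjective phi phi_bij.2
  | succ n ih =>
      rw [lcs_succ, lcs_succ, Subgroup.map_commutator, ih,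
        Subgroup.map_top_of_surjective phi phi_bij.2]

lemma lcs_Z_eq_comap (n : ℕ) :
    (⊤ : Subgroup Z2Z2).lowerCentralSeries n = ((⊤ : Subgroup D).lowerCentralSeries n).comap phi := by
  rw [← map_lcs, Subgroup.comap_map_eq_self_of_injective phi_bij.1]

/-! ### Part 1 -/

def q2 : ZMod 0 →+* ZMod 2 := ZMod.castHom (dvd_zero 2) (ZMod 2)

lemma q2_cast (i : ℤ) : q2 (Int.cast i : ZMod 0) = (i : ZMod 2) := map_intCast q2 i

def thetaFun : D → Multiplicative (ZMod 2 × ZMod 2)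
  | .r i => Multiplicative.ofAdd (q2 i, q2 i)
  | .sr i => Multiplicative.ofAdd (q2 i + 1, q2 i)

def theta : D →* Multiplicative (ZMod 2 × ZMod 2) :=
  MonoidHom.mk' thetaFun (by
    rintro (i | i) (j | j) <;>
      · show Multiplicative.ofAdd _ = Multiplicative.ofAdd _ * Multiplicative.ofAdd _
        rw [← ofAdd_add]
        congr 1
        refine Prod.ext ?_ ?_ <;>
          · simp only [Prod.fst_add, Prod.snd_add, map_add, map_sub]
            try
              generalize q2 i = u
              generalize q2 j = v
              revert u v
              decide)

lemma theta_r (i : ZMod 0) : theta (r i) = Multiplicative.ofAdd (q2 i, q2 i) := rfl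
lemma theta_sr (i : ZMod 0) : theta (sr i) = Multiplicative.ofAdd (q2 i + 1, q2 i) := rfl

lemma theta_surj : Function.Surjective theta := by
  intro p
  refine ⟨sr 0 ^ ((Multiplicative.toAdd p).1.val) * sr 1 ^ ((Multiplicative.toAdd p).2.val), ?_⟩
  rw [map_mul, map_pow, map_pow, theta_sr, theta_sr]
  rw [show q2 0 = 0 from map_zero q2, show q2 1 = 1 from map_one q2]
  rw [← ofAdd_nsmul, ← ofAdd_nsmul, ← ofAdd_add]
  rw [show ((Multiplicative.toAdd p).1.val •
        ((0 : ZMod 2) + 1, (0 : ZMod 2)) + (Multiplicative.toAdd p).2.val • ((1 : ZMod 2) + 1, (1 : ZMod 2)))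
      = (((Multiplicative.toAdd p).1.val : ZMod 2), ((Multiplicative.toAdd p).2.val : ZMod 2)) by
    refine Prod.ext ?_ ?_ <;>
      simp [Prod.smul_mk, nsmul_eq_mul, CharTwo.add_self_eq_zero]]
  rw [ZMod.natCast_rightInverse _, ZMod.natCast_rightInverse _]
  rw [Prod.mk.eta, ofAdd_toAdd]

lemma ker_theta : theta.ker = zpowers (r (Int.cast (2 : ℤ) : ZMod 0)) := by
  ext x
  rcases x with i | i
  · obtain ⟨i', rfl⟩ := ZMod.intCast_surjective i
    rw [MonoidHom.mem_ker, theta_r, r_mem_zpowers_iff, q2_cast]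
    constructor
    · intro h
      have h1 : ((i' : ZMod 2), (i' : ZMod 2)) = ((0 : ZMod 2), (0 : ZMod 2)) := h
      have h2 : (i' : ZMod 2) = 0 := (Prod.mk.inj h1).1
      obtain ⟨k, hk⟩ := (ZMod.intCast_zmod_eq_zero_iff_dvd i' 2).mp h2
      exact ⟨k, by exact_mod_cast congrArg (fun z : ℤ => (Int.cast z : ZMod 0)) hk⟩
    · rintro ⟨k, hk⟩
      have hik : i' = 2 * k := by exact_mod_cast hk
      subst hik
      have hz : ((2 * k : ℤ) : ZMod 2) = 0 :=
        (ZMod.intCast_zmod_eq_zero_iff_dvd _ 2).mpr ⟨k, by norm_num⟩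
      show Multiplicative.ofAdd (((2 * k : ℤ) : ZMod 2), ((2 * k : ℤ) : ZMod 2)) = 1
      rw [hz]
      rfl
  · constructor
    · intro h
      exfalso
      rw [MonoidHom.mem_ker, theta_sr] at h
      have h1 : (q2 i + 1, q2 i) = ((0 : ZMod 2), (0 : ZMod 2)) := h
      obtain ⟨h2, h3⟩ := Prod.mk.inj h1
      rw [h3, zero_add] at h2
      exact one_ne_zero h2
    · intro h
      exact absurd h (sr_not_mem_zpowers 2 i)

lemma ker_theta_phi : (theta.comp phi).ker = (⊤ : Subgroup Z2Z2).lowerCentralSeries 1 := by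
  have h1 : (theta.comp phi).ker = theta.ker.comap phi := rfl
  rw [h1, ker_theta, lcs_Z_eq_comap 1, lcs_D 1 le_rfl]
  norm_num

noncomputable def iso1 : (Z2Z2 ⧸ (⊤ : Subgroup Z2Z2).lowerCentralSeries 1) ≃* Multiplicative (ZMod 2 × ZMod 2) :=
  (QuotientGroup.quotientMulEquivOfEq ker_theta_phi.symm).trans
    (QuotientGroup.quotientKerEquivOfSurjective (theta.comp phi)
      (theta_surj.comp phi_bij.2))

/-! ### Part 2 : quotient of zpowers by doubled zpowers -/

noncomputable def iota (m : ℤ) (hm : m ≠ 0) :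
    Multiplicative ℤ ≃* zpowers ((r (Int.cast (m : ℤ) : ZMod 0)) : D) := by
  refine MulEquiv.ofBijective
    (zpowersHom _ (⟨_, mem_zpowers _⟩ : zpowers ((r (Int.cast (m : ℤ) : ZMod 0)) : D))) ⟨?_, ?_⟩
  · intro x y hxy
    have h : (r (Int.cast (m : ℤ) : ZMod 0) : D) ^ Multiplicative.toAdd x
        = (r (Int.cast (m : ℤ) : ZMod 0) : D) ^ Multiplicative.toAdd y := by
      have := congrArg Subtype.val hxy
      simpa [zpowersHom_apply] using this
    rw [r_zpow, r_zpow] at h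
    have h2 : (m * Multiplicative.toAdd x : ℤ) = m * Multiplicative.toAdd y := by
      exact_mod_cast congrArg toInt (r.inj h)
    have h3 := mul_left_cancel₀ hm h2
    exact Multiplicative.toAdd.injective h3
  · rintro ⟨x, hx⟩
    obtain ⟨k, hk⟩ := mem_zpowers_iff.mp hx
    refine ⟨Multiplicative.ofAdd k, Subtype.ext ?_⟩
    show ((⟨_, mem_zpowers _⟩ : zpowers ((r (Int.cast (m : ℤ) : ZMod 0)) : D)) ^ k : _).val = x
    rw [SubgroupClass.coe_zpow]
    exact hk

def f2 : Multiplicative ℤ →* Multiplicative (ZMod 2) :=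
  AddMonoidHom.toMultiplicative (Int.castAddHom (ZMod 2))

lemma f2_surj : Function.Surjective f2 := by
  intro z
  obtain ⟨k, hk⟩ := ZMod.intCast_surjective (Multiplicative.toAdd z)
  exact ⟨Multiplicative.ofAdd k, by simpa [f2] using congrArg Multiplicative.ofAdd hk⟩

noncomputable def chi (m : ℤ) (hm : m ≠ 0) :
    zpowers ((r (Int.cast (m : ℤ) : ZMod 0)) : D) →* Multiplicative (ZMod 2) :=
  f2.comp (iota m hm).symm.toMonoidHom

lemma chi_surj (m : ℤ) (hm : m ≠ 0) : Function.Surjective (chi m hm) :=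
  f2_surj.comp (iota m hm).symm.surjective

lemma val_iota (m : ℤ) (hm : m ≠ 0) (z : Multiplicative ℤ) :
    ((iota m hm z : zpowers ((r (Int.cast (m : ℤ) : ZMod 0)) : D)) : D)
      = r (Int.cast (m * Multiplicative.toAdd z : ℤ) : ZMod 0) := by
  show (((zpowersHom _ _) z : zpowers ((r (Int.cast (m : ℤ) : ZMod 0)) : D)) : D) = _
  rw [zpowersHom_apply, SubgroupClass.coe_zpow]
  exact r_zpow m _

lemma chi_eq_one_iff (m : ℤ) (hm : m ≠ 0) (y : zpowers ((r (Int.cast (m : ℤ) : ZMod 0)) : D)) :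
    chi m hm y = 1 ↔ (y : D) ∈ zpowers ((r (Int.cast (2 * m : ℤ) : ZMod 0)) : D) := by
  set j : ℤ := Multiplicative.toAdd ((iota m hm).symm y) with hj
  have hy : (y : D) = r (Int.cast (m * j : ℤ) : ZMod 0) := by
    conv_lhs => rw [← (iota m hm).apply_symm_apply y]
    exact val_iota m hm _
  have hval : chi m hm y = Multiplicative.ofAdd ((j : ℤ) : ZMod 2) := rfl
  rw [hval, hy, r_mem_zpowers_iff]
  constructor
  · intro h
    have h0 : ((j : ℤ) : ZMod 2) = 0 := by
      have h' := congrArg Multiplicative.toAdd h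
      exact h'
    obtain ⟨k, hk⟩ := (ZMod.intCast_zmod_eq_zero_iff_dvd j 2).mp h0
    refine ⟨k, ?_⟩
    rw [hk]
    norm_num
    ring_nf
  · rintro ⟨k, hk⟩
    have h2 : (m * j : ℤ) = 2 * m * k := by exact_mod_cast congrArg toInt hk
    have h3 : j = 2 * k := by
      apply mul_left_cancel₀ hm
      linarith [h2]
    show Multiplicative.ofAdd ((j : ℤ) : ZMod 2) = 1
    rw [h3]
    have hz : ((2 * k : ℤ) : ZMod 2) = 0 :=
      (ZMod.intCast_zmod_eq_zero_iff_dvd _ 2).mpr ⟨k, by norm_num⟩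
    rw [hz]
    rfl

section Part2
variable (n : ℕ) (hn : 1 ≤ n)

lemma pow2_ne : ((2 : ℤ) ^ n) ≠ 0 := by positivity

noncomputable def homR : (⊤ : Subgroup Z2Z2).lowerCentralSeries n →* zpowers ((r (Int.cast ((2 : ℤ) ^ n : ℤ) : ZMod 0)) : D) :=
  (phi.comp ((⊤ : Subgroup Z2Z2).lowerCentralSeries n).subtype).codRestrict _ (fun x => by
    have hx : phi x.val ∈ (⊤ : Subgroup D).lowerCentralSeries n := by
      rw [← map_lcs]
      exact Subgroup.mem_map_of_mem phi x.2
    rwa [lcs_D n hn] at hx)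

lemma homR_surj : Function.Surjective (homR n hn) := by
  rintro ⟨y, hy⟩
  have hy' : y ∈ (⊤ : Subgroup D).lowerCentralSeries n := by rwa [lcs_D n hn]
  rw [← map_lcs] at hy'
  obtain ⟨x, hx, hphix⟩ := hy'
  exact ⟨⟨x, hx⟩, Subtype.ext hphix⟩

noncomputable def Phi2 : (⊤ : Subgroup Z2Z2).lowerCentralSeries n →* Multiplicative (ZMod 2) :=
  (chi _ (pow2_ne n)).comp (homR n hn)

lemma Phi2_surj : Function.Surjective (Phi2 n hn) :=
  (chi_surj _ (pow2_ne n)).comp (homR_surj n hn)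

lemma ker_Phi2 : (Phi2 n hn).ker
    = ((⊤ : Subgroup Z2Z2).lowerCentralSeries (n + 1)).subgroupOf ((⊤ : Subgroup Z2Z2).lowerCentralSeries n) := by
  ext x
  rw [MonoidHom.mem_ker, Phi2, MonoidHom.comp_apply, chi_eq_one_iff, Subgroup.mem_subgroupOf]
  have hval : ((homR n hn x : zpowers ((r (Int.cast ((2 : ℤ) ^ n : ℤ) : ZMod 0)) : D)) : D)
      = phi x.val := rfl
  rw [hval]
  have h1 : (⊤ : Subgroup Z2Z2).lowerCentralSeries (n + 1)
      = (zpowers ((r (Int.cast (2 * 2 ^ n : ℤ) : ZMod 0)) : D)).comap phi := by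
    rw [lcs_Z_eq_comap (n + 1), lcs_D (n + 1) (by omega)]
    norm_num
    ring_nf
  rw [h1]
  rfl

noncomputable def iso2 : (((⊤ : Subgroup Z2Z2).lowerCentralSeries n) ⧸
      (((⊤ : Subgroup Z2Z2).lowerCentralSeries (n + 1)).subgroupOf ((⊤ : Subgroup Z2Z2).lowerCentralSeries n)))
    ≃* Multiplicative (ZMod 2) :=
  (QuotientGroup.quotientMulEquivOfEq (ker_Phi2 n hn).symm).trans
    (QuotientGroup.quotientKerEquivOfSurjective (Phi2 n hn) (Phi2_surj n hn))

end Part2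

/-! ### Part 2 : quotient of zpowers -/

end Z2Z2Aux

/-- For `G = ℤ/2 * ℤ/2` one has `γ₁(G)/γ₂(G) ≅ ℤ/2 ⊕ ℤ/2` and `γ_k(G)/γ_{k+1}(G) ≅ ℤ/2`
for every `k ≥ 2` (here `γ_k = lowerCentralSeries _ (k - 1)`). -/
theorem lcs_quotients_Z2Z2 :
    Nonempty ((Z2Z2 ⧸ (⊤ : Subgroup Z2Z2).lowerCentralSeries 1) ≃*
      Multiplicative (ZMod 2 × ZMod 2)) ∧
    ∀ k : ℕ, 2 ≤ k →
      Nonempty ((((⊤ : Subgroup Z2Z2).lowerCentralSeries (k - 1)) ⧸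
        (((⊤ : Subgroup Z2Z2).lowerCentralSeries k).subgroupOf ((⊤ : Subgroup Z2Z2).lowerCentralSeries (k - 1)))) ≃*
          Multiplicative (ZMod 2)) := by
  constructor
  · exact ⟨Z2Z2Aux.iso1⟩
  · intro k hk
    obtain ⟨n, rfl⟩ : ∃ n, k = n + 1 := ⟨k - 1, by omega⟩
    have hn : 1 ≤ n := by omega
    exact ⟨Z2Z2Aux.iso2 n hn⟩
end

section
/- Let L be the free Lie algebra over Z/2 on two generators μ_1, μ_2, graded with deg μ_i = 1. Then its third graded component L³ is a 2-dimensional Z/2-vector space with basis [[μ_1, μ_2], μ_1] and [[μ_1, μ_2], μ_2], whereas for G = Z/2 * Z/2 the quotient γ_3(G)/γ_4(G) ≅ Z/2; in particular the canonical epimorphism L → L(G) sending μ_i to ḡ_i is not injective, identifying [[μ_1, μ_2], μ_1] with [[μ_1, μ_2], μ_2]. -/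
/-- The generators `μ₁, μ₂` of the free Lie algebra over `ℤ/2` on two generators. -/
noncomputable def μ (i : Fin 2) : FreeLieAlgebra (ZMod 2) (Fin 2) :=
  FreeLieAlgebra.of (ZMod 2) i

/-- The third graded component of the free Lie algebra over `ℤ/2` on `μ₁, μ₂`
(with `deg μᵢ = 1`): the span of the left-nested brackets of length 3 in the generators. -/
noncomputable def L3 : Submodule (ZMod 2) (FreeLieAlgebra (ZMod 2) (Fin 2)) :=
  Submodule.span (ZMod 2) {x | ∃ i j k : Fin 2, x = ⁅⁅μ i, μ j⁆, μ k⁆}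


namespace ZZ

noncomputable def a : Z2Z2 := PresentedGroup.of 0
noncomputable def b : Z2Z2 := PresentedGroup.of 1
noncomputable def t : Z2Z2 := a * b

lemma rel (i : Fin 2) : (PresentedGroup.of i : Z2Z2) * PresentedGroup.of i = 1 := by
  have : (PresentedGroup.of i : Z2Z2) * PresentedGroup.of i
      = PresentedGroup.mk _ (FreeGroup.of i ^ 2) := by
    simp [PresentedGroup.of, pow_two, map_mul]
  rw [this]
  apply (QuotientGroup.eq_one_iff _).2
  exact Subgroup.subset_normalClosure ⟨i, rfl⟩

lemma ha : a * a = 1 := rel 0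
lemma hb : b * b = 1 := rel 1
lemma ainv : a⁻¹ = a := inv_eq_of_mul_eq_one_right ha
lemma binv : b⁻¹ = b := inv_eq_of_mul_eq_one_right hb
lemma tinv : t⁻¹ = b * a := by rw [t, mul_inv_rev, ainv, binv]

lemma haL (x : Z2Z2) : a * (a * x) = x := by rw [← mul_assoc, ha, one_mul]
lemma hbL (x : Z2Z2) : b * (b * x) = x := by rw [← mul_assoc, hb, one_mul]

lemma ata : a * t * a = t⁻¹ := by
  rw [tinv, t]; simp only [mul_assoc, haL]
lemma btb : b * t * b = t⁻¹ := by
  rw [tinv, t, mul_assoc, mul_assoc, hb, mul_one]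

lemma atna (n : ℤ) : a * t ^ n * a = t ^ (-n) := by
  calc a * t ^ n * a = (a * t * a⁻¹) ^ n := by rw [conj_zpow, ainv]
  _ = t ^ (-n) := by rw [ainv, ata, inv_zpow, ← zpow_neg]

lemma move (m : ℤ) : a * t ^ m = t ^ (-m) * a := by
  calc a * t ^ m = (a * t ^ m * a) * a := by rw [mul_assoc, ha, mul_one]
  _ = t ^ (-m) * a := by rw [atna]

/-- Normal form: every element of `ℤ/2 * ℤ/2` is `t^n` or `t^n * a`. -/
lemma normal_form (g : Z2Z2) : (∃ n : ℤ, g = t ^ n) ∨ (∃ n : ℤ, g = t ^ n * a) := by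
  have hgen : g ∈ Subgroup.closure (Set.range (PresentedGroup.of :
      Fin 2 → Z2Z2)) := by
    rw [PresentedGroup.closure_range_of]; trivial
  induction hgen using Subgroup.closure_induction with
  | mem x hx =>
    obtain ⟨i, rfl⟩ := hx
    fin_cases i
    · exact Or.inr ⟨0, by rw [zpow_zero, one_mul]; rfl⟩
    · refine Or.inr ⟨-1, ?_⟩
      show b = t ^ (-1 : ℤ) * a
      rw [zpow_neg, zpow_one, tinv, mul_assoc, ha, mul_one]
  | one => exact Or.inl ⟨0, by rw [zpow_zero]⟩
  | mul x y _ _ hx hy =>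
    rcases hx with ⟨n, rfl⟩ | ⟨n, rfl⟩ <;> rcases hy with ⟨m, rfl⟩ | ⟨m, rfl⟩
    · exact Or.inl ⟨n + m, by rw [zpow_add]⟩
    · exact Or.inr ⟨n + m, by rw [zpow_add, mul_assoc]⟩
    · refine Or.inr ⟨n - m, ?_⟩
      rw [mul_assoc, move, ← mul_assoc, ← zpow_add, ← sub_eq_add_neg]
    · refine Or.inl ⟨n - m, ?_⟩
      calc t ^ n * a * (t ^ m * a) = t ^ n * (a * t ^ m) * a := by
            rw [mul_assoc, mul_assoc, mul_assoc]
      _ = t ^ (n - m) := by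
            rw [move, ← mul_assoc, ← zpow_add, ← sub_eq_add_neg, mul_assoc, ha, mul_one]
  | inv x _ hx =>
    rcases hx with ⟨n, rfl⟩ | ⟨n, rfl⟩
    · exact Or.inl ⟨-n, by rw [zpow_neg]⟩
    · refine Or.inr ⟨n, ?_⟩
      rw [mul_inv_rev, ainv, ← zpow_neg, move, neg_neg]

end ZZ

namespace ZZ

open scoped commutatorElement

lemma refl_mul (n m : ℤ) : (t ^ n * a) * (t ^ m * a) = t ^ (n - m) := by
  calc t ^ n * a * (t ^ m * a) = t ^ n * (a * t ^ m) * a := by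
        rw [mul_assoc, mul_assoc, mul_assoc]
  _ = t ^ (n - m) := by
        rw [move, ← mul_assoc, ← zpow_add, ← sub_eq_add_neg, mul_assoc, ha, mul_one]

lemma comm_t2 : ⁅a, b⁆ = t * t := by
  rw [commutatorElement_def, ainv, binv]
  show a * b * a * b = a * b * (a * b)
  simp only [mul_assoc]

/-- The representation in the infinite dihedral group. -/
noncomputable def φ : Z2Z2 →* DihedralGroup 0 := by
  apply PresentedGroup.toGroup (f := fun i : Fin 2 => DihedralGroup.sr (i : ZMod 0))
  rintro r ⟨i, rfl⟩
  rw [map_pow, FreeGroup.lift_apply_of, pow_two, DihedralGroup.sr_mul_sr, sub_self,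
    DihedralGroup.one_def]

lemma φt : φ t = DihedralGroup.r 1 := by
  have h0 : φ a = DihedralGroup.sr ((0 : Fin 2) : ZMod 0) := PresentedGroup.toGroup.of _
  have h1 : φ b = DihedralGroup.sr ((1 : Fin 2) : ZMod 0) := PresentedGroup.toGroup.of _
  rw [t, map_mul, h0, h1, DihedralGroup.sr_mul_sr]
  norm_num

lemma t_inf : ¬ IsOfFinOrder t := by
  intro h
  have := φ.isOfFinOrder h
  rw [φt, ← orderOf_pos_iff, DihedralGroup.orderOf_r_one] at this
  exact lt_irrefl 0 this

lemma t_injective : Function.Injective fun n : ℤ => t ^ n :=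
  injective_zpow_iff_not_isOfFinOrder.2 t_inf

lemma conj_mem (g : Z2Z2) (m : ℤ) : g⁻¹ * t ^ m * g = t ^ m ∨ g⁻¹ * t ^ m * g = t ^ (-m) := by
  rcases normal_form g with ⟨n, rfl⟩ | ⟨n, rfl⟩
  · left; rw [← zpow_neg, ← zpow_add, ← zpow_add]; ring_nf
  · right
    rw [mul_inv_rev, ainv, ← zpow_neg]
    calc a * t ^ (-n) * t ^ m * (t ^ n * a) = a * (t ^ (-n) * t ^ m * t ^ n) * a := by
          simp only [mul_assoc]
    _ = a * t ^ m * a := by rw [← zpow_add, ← zpow_add]; ring_nf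
    _ = t ^ (-m) := atna m

lemma conj_mem' (g : Z2Z2) (m : ℤ) :
    g * t ^ m * g⁻¹ = t ^ m ∨ g * t ^ m * g⁻¹ = t ^ (-m) := by
  simpa [inv_inv] using conj_mem g⁻¹ m

lemma comm_cases (k : ℤ) (g : Z2Z2) : ⁅t ^ k, g⁆ = 1 ∨ ⁅t ^ k, g⁆ = t ^ (2 * k) := by
  have e : ⁅t ^ k, g⁆ = t ^ k * (g * t ^ (-k) * g⁻¹) := by
    rw [commutatorElement_def, zpow_neg]; simp only [mul_assoc]
  rcases conj_mem' g (-k) with h | h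
  · rw [e, h, ← zpow_add]; left; simp
  · rw [e, h, neg_neg, ← zpow_add]; right; congr 1; ring

lemma comm_zpowers (m : ℤ) :
    ⁅Subgroup.zpowers (t ^ m), (⊤ : Subgroup Z2Z2)⁆ = Subgroup.zpowers (t ^ (2 * m)) := by
  apply le_antisymm
  · rw [Subgroup.commutator_le]
    intro x hx g _
    obtain ⟨k, rfl⟩ := Subgroup.mem_zpowers_iff.1 hx
    rw [← zpow_mul]
    rcases comm_cases (m * k) g with h | h
    · rw [h]; exact one_mem _
    · rw [h]
      have : 2 * (m * k) = (2 * m) * k := by ring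
      rw [this, zpow_mul t (2 * m) k]
      exact Subgroup.zpow_mem_zpowers _ _
  · rw [Subgroup.zpowers_le]
    have e : ⁅t ^ m, a⁆ = t ^ m * (a * t ^ (-m) * a) := by
      rw [commutatorElement_def, ainv, ← zpow_neg]; simp only [mul_assoc]
    have : t ^ (2 * m) = ⁅t ^ m, a⁆ := by
      rw [e, atna, neg_neg, ← zpow_add, two_mul]
    rw [this]
    exact Subgroup.commutator_mem_commutator (Subgroup.mem_zpowers _) (Subgroup.mem_top _)

lemma gamma2 : Subgroup.lowerCentralSeries (⊤ : Subgroup Z2Z2) 1 = Subgroup.zpowers (t ^ (2 : ℤ)) := by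
  rw [Subgroup.top_lowerCentralSeries_one, commutator_def]
  apply le_antisymm
  · rw [Subgroup.commutator_le]
    intro x _ y _
    rcases normal_form x with ⟨n, rfl⟩ | ⟨n, rfl⟩
    · rcases comm_cases n y with h | h
      · rw [h]; exact one_mem _
      · rw [h, zpow_mul t 2 n]; exact Subgroup.zpow_mem_zpowers _ _
    · rcases normal_form y with ⟨m, rfl⟩ | ⟨m, rfl⟩
      · rw [← commutatorElement_inv]
        apply inv_mem
        rcases comm_cases m (t ^ n * a) with h | h
        · rw [h]; exact one_mem _
        · rw [h, zpow_mul t 2 m]; exact Subgroup.zpow_mem_zpowers _ _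
      · have e : ⁅t ^ n * a, t ^ m * a⁆ = ((t ^ n * a) * (t ^ m * a)) *
            ((t ^ m * a) * (t ^ n * a))⁻¹ := by
          simp only [commutatorElement_def, mul_inv_rev, mul_assoc]
        rw [e, refl_mul, refl_mul, ← zpow_neg, ← zpow_add]
        have : n - m + -(m - n) = 2 * (n - m) := by ring
        rw [this, zpow_mul t 2 (n - m)]
        exact Subgroup.zpow_mem_zpowers _ _
  · rw [Subgroup.zpowers_le]
    have : t ^ (2 : ℤ) = ⁅a, b⁆ := by
      rw [comm_t2, show (2:ℤ) = 1 + 1 from rfl, zpow_add, zpow_one]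
    rw [this]
    exact Subgroup.commutator_mem_commutator (Subgroup.mem_top _) (Subgroup.mem_top _)

lemma gamma3 : Subgroup.lowerCentralSeries (⊤ : Subgroup Z2Z2) 2 = Subgroup.zpowers (t ^ (4 : ℤ)) := by
  have : Subgroup.lowerCentralSeries (⊤ : Subgroup Z2Z2) 2 = ⁅Subgroup.lowerCentralSeries (⊤ : Subgroup Z2Z2) 1, ⊤⁆ := rfl
  rw [this, gamma2, comm_zpowers]
  norm_num

lemma gamma4 : Subgroup.lowerCentralSeries (⊤ : Subgroup Z2Z2) 3 = Subgroup.zpowers (t ^ (8 : ℤ)) := by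
  have : Subgroup.lowerCentralSeries (⊤ : Subgroup Z2Z2) 3 = ⁅Subgroup.lowerCentralSeries (⊤ : Subgroup Z2Z2) 2, ⊤⁆ := rfl
  rw [this, gamma3, comm_zpowers]
  norm_num

end ZZ

namespace ZZ

lemma t4_pow_injective : Function.Injective fun k : ℤ => (t ^ (4:ℤ)) ^ k := by
  intro i j h
  simp only [← zpow_mul] at h
  have := t_injective h
  omega

noncomputable abbrev H : Subgroup Z2Z2 := Subgroup.zpowers (t ^ (4:ℤ))
noncomputable abbrev K : Subgroup Z2Z2 := Subgroup.zpowers (t ^ (8:ℤ))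

noncomputable def exp4 (x : H) : ℤ := Classical.choose (Subgroup.mem_zpowers_iff.1 x.2)

lemma exp4_spec (x : H) : (t ^ (4:ℤ)) ^ (exp4 x) = (x : Z2Z2) :=
  Classical.choose_spec (Subgroup.mem_zpowers_iff.1 x.2)

lemma exp4_eq (x : H) (k : ℤ) (h : (t ^ (4:ℤ)) ^ k = (x : Z2Z2)) : exp4 x = k :=
  t4_pow_injective ((exp4_spec x).trans h.symm)

noncomputable def f : H →* Multiplicative (ZMod 2) where
  toFun x := Multiplicative.ofAdd ((exp4 x : ZMod 2))
  map_one' := by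
    have : exp4 1 = 0 := exp4_eq 1 0 (by simp)
    simp [this]
  map_mul' x y := by
    have : exp4 (x * y) = exp4 x + exp4 y := by
      apply exp4_eq
      rw [zpow_add, exp4_spec, exp4_spec]; rfl
    simp [this]

lemma f_el (k : ℤ) : f ⟨(t ^ (4:ℤ)) ^ k, Subgroup.zpow_mem_zpowers _ _⟩
    = Multiplicative.ofAdd ((k : ZMod 2)) := by
  have : exp4 ⟨(t ^ (4:ℤ)) ^ k, Subgroup.zpow_mem_zpowers _ _⟩ = k := exp4_eq _ _ rfl
  rw [show f _ = Multiplicative.ofAdd ((exp4 _ : ZMod 2)) from rfl, this]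

lemma f_surj : Function.Surjective f := by
  intro z
  have hz : Multiplicative.toAdd z = 0 ∨ Multiplicative.toAdd z = 1 := by
    generalize Multiplicative.toAdd z = c; revert c; decide
  rcases hz with h | h
  · exact ⟨⟨(t ^ (4:ℤ)) ^ (0:ℤ), Subgroup.zpow_mem_zpowers _ _⟩, by
      rw [f_el]; simp [← h]⟩
  · exact ⟨⟨(t ^ (4:ℤ)) ^ (1:ℤ), Subgroup.zpow_mem_zpowers _ _⟩, by
      rw [f_el]; simp [← h]⟩

lemma f_ker : f.ker = K.subgroupOf H := by
  ext x
  constructor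
  · intro hx
    have h0 : ((exp4 x : ZMod 2)) = 0 := by
      have := hx
      exact MonoidHom.mem_ker.1 this
    rw [ZMod.intCast_zmod_eq_zero_iff_dvd] at h0
    obtain ⟨j, hj⟩ := h0
    have : (x : Z2Z2) = (t ^ (8:ℤ)) ^ j := by
      rw [← exp4_spec x, hj, ← zpow_mul, ← zpow_mul]
      congr 1
      push_cast
      ring
    exact Subgroup.mem_subgroupOf.2 (this ▸ Subgroup.zpow_mem_zpowers _ _)
  · intro hx
    obtain ⟨j, hj⟩ := Subgroup.mem_zpowers_iff.1 (Subgroup.mem_subgroupOf.1 hx)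
    have he : exp4 x = 2 * j := by
      apply exp4_eq
      rw [← hj, ← zpow_mul, ← zpow_mul]
      congr 1
      ring
    have : ((exp4 x : ZMod 2)) = 0 := by
      rw [he, ZMod.intCast_zmod_eq_zero_iff_dvd]
      exact_mod_cast dvd_mul_right (2:ℤ) j
    simp [MonoidHom.mem_ker, f, this]

end ZZ

namespace ZZ

lemma part2 : Nonempty (((Subgroup.lowerCentralSeries (⊤ : Subgroup Z2Z2) 2) ⧸
    ((Subgroup.lowerCentralSeries (⊤ : Subgroup Z2Z2) 3).subgroupOf (Subgroup.lowerCentralSeries (⊤ : Subgroup Z2Z2) 2))) ≃*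
      Multiplicative (ZMod 2)) := by
  haveI : (K.subgroupOf H).Normal := f_ker ▸ (MonoidHom.normal_ker f)
  exact ⟨(QuotientGroup.equivQuotientSubgroupOfOfEq gamma4 gamma3).trans
    ((QuotientGroup.quotientMulEquivOfEq f_ker.symm).trans
      (QuotientGroup.quotientKerEquivOfSurjective f f_surj))⟩

lemma gcomm_eq : gcomm (gcomm a b) a = gcomm (gcomm a b) b := by
  simp only [gcomm, mul_inv_rev, ainv, binv, mul_assoc, haL, hbL, inv_inv, ha, hb, mul_one]

lemma part3 : gcomm (gcomm a b) a * (gcomm (gcomm a b) b)⁻¹ ∈ Subgroup.lowerCentralSeries (⊤ : Subgroup Z2Z2) 3 := by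
  rw [gcomm_eq, mul_inv_cancel]
  exact one_mem _

end ZZ

namespace LL

attribute [local instance] LieRing.ofAssociativeRing

noncomputable def F : FreeLieAlgebra (ZMod 2) (Fin 2) →ₗ⁅ZMod 2⁆ FreeAlgebra (ZMod 2) (Fin 2) :=
  FreeLieAlgebra.lift _ (fun i => FreeAlgebra.ι (ZMod 2) i)

noncomputable def E : FreeAlgebra (ZMod 2) (Fin 2) ≃ₐ[ZMod 2]
    MonoidAlgebra (ZMod 2) (FreeMonoid (Fin 2)) :=
  FreeAlgebra.equivMonoidAlgebraFreeMonoid (R := ZMod 2) (X := Fin 2)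

lemma E_ι (i : Fin 2) : E (FreeAlgebra.ι (ZMod 2) i)
    = MonoidAlgebra.single (FreeMonoid.of i) 1 := by
  simp [E, FreeAlgebra.equivMonoidAlgebraFreeMonoid]

noncomputable def coef (w : List (Fin 2)) :
    FreeLieAlgebra (ZMod 2) (Fin 2) →ₗ[ZMod 2] ZMod 2 :=
  (Finsupp.lapply (FreeMonoid.ofList w)) ∘ₗ (MonoidAlgebra.coeffLinearEquiv (ZMod 2)).toLinearMap ∘ₗ
    E.toLinearMap ∘ₗ F.toLinearMap

lemma coef_apply (w : List (Fin 2)) (x : FreeLieAlgebra (ZMod 2) (Fin 2)) :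
    coef w x = (E (F x)).coeff (FreeMonoid.ofList w) := rfl

lemma eval (u v : List (Fin 2)) :
    (MonoidAlgebra.single (FreeMonoid.ofList u) (1:ZMod 2)).coeff (FreeMonoid.ofList v)
      = if u = v then 1 else 0 := by
  classical
  rw [MonoidAlgebra.coeff_single, Finsupp.single_apply]
  exact if_congr Iff.rfl rfl rfl

lemma triple (i j k : Fin 2) :
    FreeMonoid.of i * FreeMonoid.of j * FreeMonoid.of k = FreeMonoid.ofList [i,j,k] := rfl
lemma triple' (i j k : Fin 2) :
    FreeMonoid.of i * (FreeMonoid.of j * FreeMonoid.of k) = FreeMonoid.ofList [i,j,k] := rfl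

lemma coef_bracket (i j k : Fin 2) (w : List (Fin 2)) :
    coef w ⁅⁅μ i, μ j⁆, μ k⁆ =
      (if [i,j,k] = w then 1 else 0) - (if [j,i,k] = w then 1 else 0)
      - ((if [k,i,j] = w then 1 else 0) - (if [k,j,i] = w then 1 else 0)) := by
  simp only [coef_apply, F, μ, FreeLieAlgebra.lift_of_apply, LieHom.map_lie, Ring.lie_def,
    map_sub, map_mul, E_ι, sub_mul, mul_sub, MonoidAlgebra.single_mul_single, one_mul,
    triple, triple']
  rw [MonoidAlgebra.coeff_sub, MonoidAlgebra.coeff_sub, MonoidAlgebra.coeff_sub]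
  rw [Finsupp.sub_apply, Finsupp.sub_apply, Finsupp.sub_apply]
  simp only [eval]

lemma c1e1 : coef [0,0,1] ⁅⁅μ 0, μ 1⁆, μ 0⁆ = 1 := by
  rw [coef_bracket]; decide
lemma c1e2 : coef [0,0,1] ⁅⁅μ 0, μ 1⁆, μ 1⁆ = 0 := by
  rw [coef_bracket]; decide
lemma c2e1 : coef [1,1,0] ⁅⁅μ 0, μ 1⁆, μ 0⁆ = 0 := by
  rw [coef_bracket]; decide
lemma c2e2 : coef [1,1,0] ⁅⁅μ 0, μ 1⁆, μ 1⁆ = 1 := by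
  rw [coef_bracket]; decide

lemma li : LinearIndependent (ZMod 2)
    ![(⁅⁅μ 0, μ 1⁆, μ 0⁆ : FreeLieAlgebra (ZMod 2) (Fin 2)), ⁅⁅μ 0, μ 1⁆, μ 1⁆] := by
  rw [Fintype.linearIndependent_iff]
  intro g hg
  rw [Fin.sum_univ_two] at hg
  simp only [Matrix.cons_val_zero, Matrix.cons_val_one, Matrix.head_cons] at hg
  have e1 := congrArg (coef [0,0,1]) hg
  have e2 := congrArg (coef [1,1,0]) hg
  simp only [map_add, map_smul, map_zero, c1e1, c1e2, c2e1, c2e2, smul_eq_mul,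
    mul_one, mul_zero, add_zero, zero_add] at e1 e2
  intro i
  fin_cases i
  · exact e1
  · exact e2

lemma hspan : L3 = Submodule.span (ZMod 2)
    {(⁅⁅μ 0, μ 1⁆, μ 0⁆ : FreeLieAlgebra (ZMod 2) (Fin 2)), ⁅⁅μ 0, μ 1⁆, μ 1⁆} := by
  apply le_antisymm
  · rw [L3, Submodule.span_le]
    rintro x ⟨i, j, k, rfl⟩
    have h2 : ∀ i : Fin 2, i = 0 ∨ i = 1 := by decide
    rcases h2 i with rfl | rfl <;> rcases h2 j with rfl | rfl
    · rw [lie_self, zero_lie]; exact zero_mem _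
    · rcases h2 k with rfl | rfl
      · exact Submodule.subset_span (Set.mem_insert _ _)
      · exact Submodule.subset_span (Set.mem_insert_iff.2 (Or.inr rfl))
    · have hsk : (⁅μ 1, μ 0⁆ : FreeLieAlgebra (ZMod 2) (Fin 2)) = -⁅μ 0, μ 1⁆ :=
        (lie_skew (μ 1) (μ 0)).symm
      rw [hsk, neg_lie]
      apply neg_mem
      rcases h2 k with rfl | rfl
      · exact Submodule.subset_span (Set.mem_insert _ _)
      · exact Submodule.subset_span (Set.mem_insert_iff.2 (Or.inr rfl))
    · rw [lie_self, zero_lie]; exact zero_mem _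
  · rw [Submodule.span_le]
    rintro x hx
    rcases Set.mem_insert_iff.1 hx with rfl | h
    · exact Submodule.subset_span ⟨0, 1, 0, rfl⟩
    · rw [Set.mem_singleton_iff] at h
      subst h
      exact Submodule.subset_span ⟨0, 1, 1, rfl⟩

lemma part1 (h1 : ⁅⁅μ 0, μ 1⁆, μ 0⁆ ∈ L3) (h2 : ⁅⁅μ 0, μ 1⁆, μ 1⁆ ∈ L3) :
    ∃ b : Module.Basis (Fin 2) (ZMod 2) L3,
      b 0 = ⟨⁅⁅μ 0, μ 1⁆, μ 0⁆, h1⟩ ∧ b 1 = ⟨⁅⁅μ 0, μ 1⁆, μ 1⁆, h2⟩ := by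
  set v : Fin 2 → L3 := ![⟨⁅⁅μ 0, μ 1⁆, μ 0⁆, h1⟩, ⟨⁅⁅μ 0, μ 1⁆, μ 1⁆, h2⟩] with hv
  have hli : LinearIndependent (ZMod 2) v := by
    apply LinearIndependent.of_comp L3.subtype
    have : (L3.subtype ∘ v) = ![⁅⁅μ 0, μ 1⁆, μ 0⁆, ⁅⁅μ 0, μ 1⁆, μ 1⁆] := by
      funext i; fin_cases i <;> rfl
    rw [this]
    exact li
  have hsp : ⊤ ≤ Submodule.span (ZMod 2) (Set.range v) := by
    intro z _
    obtain ⟨m, n, hmn⟩ := Submodule.mem_span_pair.1 (hspan.le z.2)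
    have hz : z = m • v 0 + n • v 1 := by
      apply Subtype.ext
      exact hmn.symm
    rw [hz]
    exact add_mem (Submodule.smul_mem _ _ (Submodule.subset_span ⟨0, rfl⟩))
      (Submodule.smul_mem _ _ (Submodule.subset_span ⟨1, rfl⟩))
  refine ⟨Module.Basis.mk hli hsp, ?_, ?_⟩ <;> rw [Module.Basis.mk_apply]
  · rfl
  · rfl

end LL


/-- `L³` of the free Lie algebra over `ℤ/2` on `μ₁, μ₂` is 2-dimensional with basis
`[[μ₁,μ₂],μ₁]`, `[[μ₁,μ₂],μ₂]`, whereas `γ₃/γ₄ ≅ ℤ/2` for `G = ℤ/2 * ℤ/2`; the canonical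
epimorphism identifies `[[μ₁,μ₂],μ₁]` with `[[μ₁,μ₂],μ₂]` (their images
`(g₁,g₂,g₁)` and `(g₁,g₂,g₂)` agree modulo `γ₄`), so it is not injective. -/
theorem L3_free_lie_vs_Z2Z2
    (h1 : ⁅⁅μ 0, μ 1⁆, μ 0⁆ ∈ L3) (h2 : ⁅⁅μ 0, μ 1⁆, μ 1⁆ ∈ L3) :
    (∃ b : Module.Basis (Fin 2) (ZMod 2) L3,
      b 0 = ⟨⁅⁅μ 0, μ 1⁆, μ 0⁆, h1⟩ ∧ b 1 = ⟨⁅⁅μ 0, μ 1⁆, μ 1⁆, h2⟩) ∧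
    Nonempty (((Subgroup.lowerCentralSeries (⊤ : Subgroup Z2Z2) 2) ⧸
      ((Subgroup.lowerCentralSeries (⊤ : Subgroup Z2Z2) 3).subgroupOf (Subgroup.lowerCentralSeries (⊤ : Subgroup Z2Z2) 2))) ≃*
        Multiplicative (ZMod 2)) ∧
    gcomm (gcomm (PresentedGroup.of 0 : Z2Z2) (PresentedGroup.of 1)) (PresentedGroup.of 0) *
      (gcomm (gcomm (PresentedGroup.of 0 : Z2Z2) (PresentedGroup.of 1))
        (PresentedGroup.of 1))⁻¹ ∈ Subgroup.lowerCentralSeries (⊤ : Subgroup Z2Z2) 3 :=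
  ⟨LL.part1 h1 h2, ZZ.part2, ZZ.part3⟩
end

section
/- Let RC_K be a right-angled Coxeter group with generators g_i. Then for all indices i, j, the congruence (g_i, g_j, g_j, g_j) ≡ (g_j, g_i, g_j)² mod (γ_2(RC_K))' holds, where commutators are left-nested. -/
open scoped commutatorElement

lemma gcomm_eq {G : Type*} [Group G] (a b : G) : gcomm a b = ⁅a⁻¹, b⁻¹⁆ := by
  simp [gcomm, commutatorElement_def]

lemma gcomm_mem_commutator {G : Type*} [Group G] (a b : G) : gcomm a b ∈ commutator G := by
  rw [gcomm_eq, commutator_def]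
  exact Subgroup.commutator_mem_commutator (Subgroup.mem_top _) (Subgroup.mem_top _)

lemma key_identity {G : Type*} [Group G] (a b : G) (hb : b * b = 1) :
    gcomm (gcomm (gcomm a b) b) b * ((gcomm (gcomm b a) b) ^ 2)⁻¹ =
      ⁅((gcomm (gcomm a b) b) ^ 2)⁻¹, gcomm a b⁆ := by
  have hbi : b⁻¹ = b := inv_eq_of_mul_eq_one_right hb
  have hb' : ∀ x : G, b * (b * x) = x := fun x => by
    rw [← mul_assoc, hb, one_mul]
  simp [gcomm, commutatorElement_def, mul_assoc, hbi, hb', hb, pow_two,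
    mul_inv_rev, inv_mul_cancel_left, mul_inv_cancel_left]

/-- In a right-angled Coxeter group, `(g_i, g_j, g_j, g_j) ≡ (g_j, g_i, g_j)²` modulo the
derived subgroup `(γ₂)' = (RC_K', RC_K')` of the commutator subgroup. -/
theorem comm_sq_mod_gamma2' (m : ℕ) (E : Fin m → Fin m → Prop) (i j : Fin m) :
    gcomm (gcomm (gcomm (PresentedGroup.of i : RACG m E) (PresentedGroup.of j))
        (PresentedGroup.of j)) (PresentedGroup.of j) *
      ((gcomm (gcomm (PresentedGroup.of j : RACG m E) (PresentedGroup.of i))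
        (PresentedGroup.of j)) ^ 2)⁻¹ ∈
      ⁅commutator (RACG m E), commutator (RACG m E)⁆ := by
  set a : RACG m E := PresentedGroup.of i
  set b : RACG m E := PresentedGroup.of j
  have hb : b * b = 1 := by
    have hmem : ((FreeGroup.of j) ^ 2 : FreeGroup (Fin m)) ∈
        Subgroup.normalClosure (racgRels m E) :=
      Subgroup.subset_normalClosure (Or.inl ⟨j, rfl⟩)
    have : b ^ 2 = 1 := (QuotientGroup.eq_one_iff _).mpr hmem
    rwa [pow_two] at this
  rw [key_identity a b hb]
  exact Subgroup.commutator_mem_commutator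
    (Subgroup.inv_mem _ (Subgroup.pow_mem _ (gcomm_mem_commutator _ _) 2))
    (gcomm_mem_commutator _ _)
end
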